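/- Let H be a separable real Hilbert space, let (Ω, 𝔉, μ) be a probability space together with a measurable space X, let x₁, …, x_n (n ≥ 1) be independent X-valued random variables with common law μ, and let φ : X → H be a strongly measurable map with ‖φ(x)‖ ≤ c for μ-almost every x, for some c > 0. Let w = ∫ φ(x) dμ(x) be the Bochner integral and ŵ = (1/n) Σ_{i=1}^n φ(x_i) the empirical mean. Then for every δ ∈ (0, 1], with probability at least 1 − δ, ‖w − ŵ‖ ≤ 4 c n^{-1/2} log(6n/δ). -/

import Mathlib

open MeasureTheory ProbabilityTheory Finset
local notation "⟪" x ", " y "⟫" => @inner ℝ _ _ x y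

set_option linter.unusedSectionVars false
set_option linter.unusedVariables false

namespace EmpMeanAux

variable {H : Type*} [NormedAddCommGroup H] [InnerProductSpace ℝ H] [CompleteSpace H]
variable {X : Type*} [MeasurableSpace X]

noncomputable def Sp (Y : X → H) (m : ℕ) (i : ℕ) (v : Fin (m+1) → X) : H :=
  ∑ j ∈ Finset.univ.filter (fun j : Fin (m+1) => (j:ℕ) < i), Y (v j)

noncomputable def Vf (Y : X → H) (b : ℝ) (m : ℕ) (i : ℕ) (v : Fin (m+1) → X) : ℝ :=
  Real.sqrt (‖Sp Y m i v‖^2 + (m+1) * b^2)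

noncomputable def Zf (Y : X → H) (b : ℝ) (m : ℕ) (j : Fin (m+1)) (v : Fin (m+1) → X) : ℝ :=
  ⟪Sp Y m (j:ℕ) v, Y (v j)⟫ / Vf Y b m (j:ℕ) v

variable {Y : X → H} {b : ℝ} {m : ℕ}

lemma sqrtm_le_Vf (hb : 0 < b) (i : ℕ) (v : Fin (m+1) → X) :
    b * Real.sqrt (m+1) ≤ Vf Y b m i v := by
  have h1 : (m+1 : ℝ) * b^2 = (b * Real.sqrt (m+1))^2 := by
    rw [mul_pow, Real.sq_sqrt (by positivity)]; ring
  have h2 : 0 ≤ b * Real.sqrt (m+1) := by positivity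
  calc b * Real.sqrt (m+1) = Real.sqrt ((m+1) * b^2) := by rw [h1, Real.sqrt_sq h2]
    _ ≤ Vf Y b m i v := Real.sqrt_le_sqrt (by nlinarith [sq_nonneg ‖Sp Y m i v‖])

lemma Vf_pos (hb : 0 < b) (i : ℕ) (v : Fin (m+1) → X) : 0 < Vf Y b m i v :=
  lt_of_lt_of_le (by positivity) (sqrtm_le_Vf hb i v)

lemma Sp_le_Vf (hb : 0 < b) (i : ℕ) (v : Fin (m+1) → X) : ‖Sp Y m i v‖ ≤ Vf Y b m i v := by
  rw [show ‖Sp Y m i v‖ = Real.sqrt (‖Sp Y m i v‖^2) from (Real.sqrt_sq (norm_nonneg _)).symm]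
  exact Real.sqrt_le_sqrt (by nlinarith)

lemma abs_Zf_le (hb : 0 < b) (hY : ∀ x, ‖Y x‖ ≤ b) (j : Fin (m+1)) (v : Fin (m+1) → X) :
    |Zf Y b m j v| ≤ b := by
  have hV := Vf_pos (Y := Y) hb (j:ℕ) v
  rw [Zf, abs_div, abs_of_pos hV, div_le_iff₀ hV]
  calc |⟪Sp Y m (j:ℕ) v, Y (v j)⟫| ≤ ‖Sp Y m (j:ℕ) v‖ * ‖Y (v j)‖ := abs_real_inner_le_norm _ _
    _ ≤ Vf Y b m (j:ℕ) v * b := by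
        have := Sp_le_Vf (Y := Y) (b := b) hb (i := (j:ℕ)) v
        have := hY (v j)
        nlinarith [norm_nonneg (Y (v j)), norm_nonneg (Sp Y m (j:ℕ) v)]
    _ = b * Vf Y b m (j:ℕ) v := mul_comm _ _


lemma sqrt_step {A u bb : ℝ} (hA : 0 < A) (hbA : bb ≤ A) (hbb : 0 ≤ bb)
    (hu : -(2*A*bb) ≤ u) : Real.sqrt (A^2 + u) ≤ A + u/(2*A) := by
  have h2 : 0 ≤ A + u/(2*A) := by
    have h4 : -bb ≤ u/(2*A) := by
      rw [le_div_iff₀ (by positivity)]; linarith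
    linarith
  have h5 : 2*A*(u/(2*A)) = u := by field_simp
  have h3 : A^2 + u ≤ (A + u/(2*A))^2 := by nlinarith [sq_nonneg (u/(2*A))]
  calc Real.sqrt (A^2+u) ≤ Real.sqrt ((A + u/(2*A))^2) := Real.sqrt_le_sqrt h3
    _ = A + u/(2*A) := Real.sqrt_sq h2

lemma Fset_succ {i : ℕ} (hi : i < m+1) :
    Finset.univ.filter (fun j : Fin (m+1) => (j:ℕ) < i+1) =
      insert (⟨i, hi⟩ : Fin (m+1)) (Finset.univ.filter (fun j : Fin (m+1) => (j:ℕ) < i)) := by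
  ext j
  simp [Nat.lt_succ_iff_lt_or_eq, Fin.ext_iff, or_comm]
  exact le_iff_eq_or_lt

lemma Sp_succ {i : ℕ} (hi : i < m+1) (v : Fin (m+1) → X) :
    Sp Y m (i+1) v = Y (v ⟨i, hi⟩) + Sp Y m i v := by
  rw [Sp, Fset_succ hi, Finset.sum_insert (by simp), Sp]

lemma V_step (hb : 0 < b) (hY : ∀ x, ‖Y x‖ ≤ b) {i : ℕ} (hi : i < m+1) (v : Fin (m+1) → X) :
    Vf Y b m (i+1) v ≤ Vf Y b m i v + Zf Y b m ⟨i, hi⟩ v + b/(2*Real.sqrt (m+1)) := by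
  set A := Vf Y b m i v with hA
  set S := Sp Y m i v with hS
  set yy := Y (v ⟨i, hi⟩) with hyy
  have hApos : 0 < A := Vf_pos hb i v
  have hbsA : b * Real.sqrt (m+1) ≤ A := sqrtm_le_Vf hb i v
  have hsq1 : (1:ℝ) ≤ Real.sqrt (m+1) := by
    have h := Real.sqrt_le_sqrt (show (1:ℝ) ≤ (m:ℝ)+1 by push_cast; linarith)
    rwa [Real.sqrt_one] at h
  have hbA : b ≤ A := le_trans (by nlinarith) hbsA
  have hVsq : A^2 = ‖S‖^2 + (m+1)*b^2 := Real.sq_sqrt (by positivity)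
  have hSA : ‖S‖ ≤ A := Sp_le_Vf hb i v
  have hyb : ‖yy‖ ≤ b := hY _
  set u : ℝ := 2*⟪S, yy⟫ + ‖yy‖^2 with hu
  have hinner : |⟪S, yy⟫| ≤ ‖S‖ * ‖yy‖ := abs_real_inner_le_norm _ _
  have hulb : -(2*A*b) ≤ u := by
    have h1 : -(‖S‖*‖yy‖) ≤ ⟪S, yy⟫ := neg_le_of_abs_le hinner
    nlinarith [sq_nonneg ‖yy‖, norm_nonneg S, norm_nonneg yy]
  have hstep : Vf Y b m (i+1) v ≤ A + u/(2*A) := by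
    have hexp : ‖Sp Y m (i+1) v‖^2 + (m+1)*b^2 = A^2 + u := by
      rw [Sp_succ hi, hVsq]
      have := norm_add_sq_real yy S
      rw [this, hu, real_inner_comm S yy]; ring
    rw [Vf, hexp]
    exact sqrt_step hApos hbA hb.le hulb
  have hZ : Zf Y b m ⟨i, hi⟩ v = ⟪S, yy⟫ / A := rfl
  have hsplit : u/(2*A) = ⟪S, yy⟫/A + ‖yy‖^2/(2*A) := by field_simp; ring
  have hlast : ‖yy‖^2/(2*A) ≤ b/(2*Real.sqrt (m+1)) := by
    rw [div_le_div_iff₀ (by positivity) (by positivity)]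
    have h6 : ‖yy‖^2 ≤ b^2 := by nlinarith [norm_nonneg yy]
    nlinarith [mul_le_mul_of_nonneg_right h6 (Real.sqrt_nonneg ((m:ℝ)+1)),
      mul_le_mul_of_nonneg_left hbsA hb.le]
  rw [hZ]
  calc Vf Y b m (i+1) v ≤ A + u/(2*A) := hstep
    _ = A + ⟪S, yy⟫/A + ‖yy‖^2/(2*A) := by rw [hsplit]; ring
    _ ≤ A + ⟪S, yy⟫/A + b/(2*Real.sqrt (m+1)) := by linarith

lemma V_bound (hb : 0 < b) (hY : ∀ x, ‖Y x‖ ≤ b) (v : Fin (m+1) → X) :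
    ∀ i, i ≤ m+1 → Vf Y b m i v ≤ b*Real.sqrt (m+1) +
      (∑ j ∈ Finset.univ.filter (fun j : Fin (m+1) => (j:ℕ) < i), Zf Y b m j v) +
      i * (b/(2*Real.sqrt (m+1))) := by
  intro i
  induction i with
  | zero =>
    intro _
    have h0 : Sp Y m 0 v = 0 := by simp [Sp]
    have : Vf Y b m 0 v = b * Real.sqrt (m+1) := by
      rw [Vf, h0]
      have h1 : (((m:ℝ))+1) * b^2 = (b * Real.sqrt (m+1))^2 := by
        rw [mul_pow, Real.sq_sqrt (by positivity)]; ring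
      rw [norm_zero]
      rw [show (0:ℝ)^2 + ((m:ℝ)+1)*b^2 = (b * Real.sqrt (m+1))^2 by rw [← h1]; ring]
      exact Real.sqrt_sq (by positivity)
    simp [this]
  | succ i ih =>
    intro hsucc
    have hi : i < m+1 := hsucc
    have hib := ih (le_of_lt hi)
    have hstep := V_step hb hY hi v
    rw [Fset_succ hi, Finset.sum_insert (by simp)]
    push_cast
    linarith

lemma pathwise (hb : 0 < b) (hY : ∀ x, ‖Y x‖ ≤ b) (v : Fin (m+1) → X) :
    ‖Sp Y m (m+1) v‖ ≤ (3/2)*b*Real.sqrt (m+1) + ∑ j, Zf Y b m j v := by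
  have h1 : ‖Sp Y m (m+1) v‖ ≤ Vf Y b m (m+1) v := Sp_le_Vf hb _ v
  have h2 := V_bound hb hY v (m+1) le_rfl
  have h3 : Finset.univ.filter (fun j : Fin (m+1) => (j:ℕ) < m+1) = Finset.univ :=
    Finset.filter_true_of_mem (fun j _ => j.isLt)
  rw [h3] at h2
  have hsq : (0:ℝ) < Real.sqrt (m+1) := by positivity
  have h4 : ((m:ℝ)+1) * (b/(2*Real.sqrt (m+1))) = b * Real.sqrt (m+1) / 2 := by
    rw [eq_div_iff (by norm_num)]
    have : ((m:ℝ)+1) = Real.sqrt (m+1) * Real.sqrt (m+1) :=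
      (Real.mul_self_sqrt (by positivity)).symm
    field_simp
    nlinarith [this]
  push_cast at h2
  rw [h4] at h2
  linarith


lemma Sp_sm (hSM : StronglyMeasurable Y) (i : ℕ) :
    StronglyMeasurable (fun v : Fin (m+1) → X => Sp Y m i v) := by
  apply Finset.stronglyMeasurable_fun_sum
  intro j _
  exact hSM.comp_measurable (measurable_pi_apply j)

lemma Vf_meas (hSM : StronglyMeasurable Y) (i : ℕ) :
    Measurable (fun v : Fin (m+1) → X => Vf Y b m i v) :=
  (((Sp_sm hSM i).norm.measurable.pow_const 2).add_const _).sqrt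

lemma Zf_meas (hSM : StronglyMeasurable Y) (j : Fin (m+1)) :
    Measurable (fun v : Fin (m+1) → X => Zf Y b m j v) := by
  have h1 : StronglyMeasurable (fun v : Fin (m+1) → X =>
      ⟪Sp Y m (j:ℕ) v, Y (v j)⟫) :=
    StronglyMeasurable.inner (Sp_sm hSM (j:ℕ)) (hSM.comp_measurable (measurable_pi_apply j))
  exact h1.measurable.div (Vf_meas hSM (j:ℕ))

/-- Key lemma: the integral of `⟪g v, Y (v i)⟫` vanishes when `g` only depends on
coordinates before `i` and `Y` has zero mean. -/
lemma integral_inner_eval_zero (μ : Measure X) [IsProbabilityMeasure μ]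
    (hSM : StronglyMeasurable Y) (hYb : ∀ x, ‖Y x‖ ≤ b)
    (hY0 : ∫ x, Y x ∂μ = 0) (i : Fin (m+1)) (g : (Fin (m+1) → X) → H)
    (hg : StronglyMeasurable g) (C : ℝ) (hgb : ∀ v, ‖g v‖ ≤ C)
    (hdep : ∀ v w : Fin (m+1) → X, (∀ j : Fin (m+1), (j:ℕ) < (i:ℕ) → v j = w j) → g v = g w) :
    ∫ v, ⟪g v, Y (v i)⟫ ∂(Measure.pi (fun _ : Fin (m+1) => μ)) = 0 := by
  rcases isEmpty_or_nonempty X with hX | hX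
  · have : (Set.univ : Set X) = ∅ := Set.univ_eq_empty_iff.mpr hX
    have h1 : μ Set.univ = 1 := measure_univ
    rw [this] at h1; simp at h1
  obtain ⟨x₀⟩ := hX
  have hC : 0 ≤ C := le_trans (norm_nonneg _) (hgb (fun _ => x₀))
  set e := MeasurableEquiv.piFinSuccAbove (fun _ : Fin (m+1) => X) i with he
  have mp := measurePreserving_piFinSuccAbove (fun _ : Fin (m+1) => μ) i
  set ν' : Measure (Fin m → X) := Measure.pi (fun _ : Fin m => μ) with hν'
  have hesymm : ∀ (x : X) (r : Fin m → X), e.symm (x, r) = i.insertNth x r := by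
    intro x r
    rw [he, MeasurableEquiv.piFinSuccAbove_symm_apply]
    rfl
  have hA : ∀ (x : X) (r : Fin m → X), (e.symm (x, r)) i = x := by
    intro x r; rw [hesymm]; exact Fin.insertNth_apply_same (α := fun _ => X) i x r
  have hB : ∀ (x x' : X) (r : Fin m → X), g (e.symm (x, r)) = g (e.symm (x', r)) := by
    intro x x' r
    apply hdep
    intro j hj
    have hne : j ≠ i := by intro hji; rw [hji] at hj; omega
    obtain ⟨k, hk⟩ := Fin.exists_succAbove_eq hne
    rw [hesymm, hesymm, ← hk, Fin.insertNth_apply_succAbove, Fin.insertNth_apply_succAbove]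
  set F : X × (Fin m → X) → ℝ := fun z => ⟪g (e.symm z), Y (z.1)⟫ with hF
  have hFsm : StronglyMeasurable F :=
    StronglyMeasurable.inner (hg.comp_measurable e.symm.measurable)
      (hSM.comp_measurable measurable_fst)
  have hFb : ∀ z, ‖F z‖ ≤ C * b := by
    intro z
    rw [hF]
    calc ‖(⟪g (e.symm z), Y z.1⟫ : ℝ)‖ = |⟪g (e.symm z), Y z.1⟫| := Real.norm_eq_abs _
      _ ≤ ‖g (e.symm z)‖ * ‖Y z.1‖ := abs_real_inner_le_norm _ _
      _ ≤ C * b := mul_le_mul (hgb _) (hYb _) (norm_nonneg _) hC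
  have hFint : Integrable F (μ.prod ν') :=
    (integrable_const (C * b)).mono' hFsm.aestronglyMeasurable (Filter.Eventually.of_forall hFb)
  have h1 : ∫ v, ⟪g v, Y (v i)⟫ ∂(Measure.pi (fun _ : Fin (m+1) => μ)) =
      ∫ z, F z ∂(μ.prod ν') := by
    rw [← MeasurePreserving.integral_comp' mp.symm (fun v => ⟪g v, Y (v i)⟫)]
    refine integral_congr_ae (Filter.Eventually.of_forall fun z => ?_)
    obtain ⟨xx, r⟩ := z
    show (⟪g (e.symm (xx, r)), Y ((e.symm (xx, r)) i)⟫ : ℝ) = _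
    rw [hA xx r]
  set G : (Fin m → X) → H := fun r => g (e.symm (x₀, r)) with hG
  have hGsm : StronglyMeasurable G :=
    hg.comp_measurable (e.symm.measurable.comp measurable_prodMk_left)
  have hGint : Integrable G ν' :=
    (integrable_const C).mono' hGsm.aestronglyMeasurable (Filter.Eventually.of_forall fun r => hgb _)
  set CG : H := ∫ r, G r ∂ν' with hCG
  have h2 : ∀ x : X, ∫ r, F (x, r) ∂ν' = ⟪Y x, CG⟫ := by
    intro x
    have hpt : ∀ r, F (x, r) = ⟪Y x, G r⟫ := by
      intro r
      show (⟪g (e.symm (x, r)), Y x⟫ : ℝ) = _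
      rw [hB x x₀ r, real_inner_comm]
    rw [integral_congr_ae (Filter.Eventually.of_forall hpt)]
    exact integral_inner hGint (Y x)
  have hYint : Integrable Y μ :=
    (integrable_const b).mono' hSM.aestronglyMeasurable (Filter.Eventually.of_forall hYb)
  rw [h1, integral_prod F hFint]
  rw [integral_congr_ae (Filter.Eventually.of_forall h2)]
  have h3 : ∀ x : X, (⟪Y x, CG⟫ : ℝ) = ⟪CG, Y x⟫ := fun x => real_inner_comm _ _
  rw [integral_congr_ae (Filter.Eventually.of_forall h3), integral_inner hYint CG, hY0]
  simp


lemma Sp_congr {i : ℕ} {v w : Fin (m+1) → X} (h : ∀ j : Fin (m+1), (j:ℕ) < i → v j = w j) :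
    Sp Y m i v = Sp Y m i w :=
  Finset.sum_congr rfl fun j hj => by rw [h j (Finset.mem_filter.mp hj).2]

lemma Zf_congr {j : Fin (m+1)} {v w : Fin (m+1) → X}
    (h : ∀ k : Fin (m+1), (k:ℕ) ≤ (j:ℕ) → v k = w k) : Zf Y b m j v = Zf Y b m j w := by
  have hS : Sp Y m (j:ℕ) v = Sp Y m (j:ℕ) w := Sp_congr fun k hk => h k (le_of_lt hk)
  rw [Zf, Zf, hS, h j le_rfl, Vf, Vf, hS]

/-- The product of factors `a + s' * Zf j` over `j < i`. -/
noncomputable def Pf (Y : X → H) (b : ℝ) (m : ℕ) (a s' : ℝ) (i : ℕ) (v : Fin (m+1) → X) : ℝ :=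
  ∏ j ∈ Finset.univ.filter (fun j : Fin (m+1) => (j:ℕ) < i), (a + s' * Zf Y b m j v)

lemma Pf_congr {a s' : ℝ} {i : ℕ} (hi : i ≤ m+1) {v w : Fin (m+1) → X}
    (h : ∀ j : Fin (m+1), (j:ℕ) < i → v j = w j) : Pf Y b m a s' i v = Pf Y b m a s' i w := by
  refine Finset.prod_congr rfl fun j hj => ?_
  have hj' : (j:ℕ) < i := (Finset.mem_filter.mp hj).2
  rw [Zf_congr (fun k hk => h k (lt_of_le_of_lt hk hj'))]

lemma Pf_meas (hSM : StronglyMeasurable Y) (a s' : ℝ) (i : ℕ) :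
    Measurable (fun v : Fin (m+1) → X => Pf Y b m a s' i v) := by
  apply Finset.measurable_prod
  intro j _
  exact (measurable_const.add (measurable_const.mul (Zf_meas hSM j)))

lemma abs_Pf_le (hb : 0 < b) (hY : ∀ x, ‖Y x‖ ≤ b) (a s' : ℝ) (i : ℕ) (v : Fin (m+1) → X) :
    |Pf Y b m a s' i v| ≤ (1 + |a| + |s'| * b) ^ (m+1) := by
  set K := 1 + |a| + |s'| * b with hK
  have hK1 : (1:ℝ) ≤ K := by
    have := abs_nonneg a; have := abs_nonneg s'
    nlinarith [abs_nonneg s', hb.le, mul_nonneg (abs_nonneg s') hb.le]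
  calc |Pf Y b m a s' i v| = ∏ j ∈ Finset.univ.filter (fun j : Fin (m+1) => (j:ℕ) < i),
        |a + s' * Zf Y b m j v| := Finset.abs_prod _ _
    _ ≤ ∏ j ∈ Finset.univ.filter (fun j : Fin (m+1) => (j:ℕ) < i), K := by
        refine Finset.prod_le_prod (fun j _ => abs_nonneg _) (fun j _ => ?_)
        calc |a + s' * Zf Y b m j v| ≤ |a| + |s'| * |Zf Y b m j v| := by
              rw [← abs_mul]; exact abs_add_le _ _
          _ ≤ K := by
              have h2 := abs_Zf_le hb hY j v
              have h3 : |s'| * |Zf Y b m j v| ≤ |s'| * b :=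
                mul_le_mul_of_nonneg_left h2 (abs_nonneg s')
              rw [hK]; linarith
    _ = K ^ (Finset.univ.filter (fun j : Fin (m+1) => (j:ℕ) < i)).card := Finset.prod_const K
    _ ≤ K ^ (m+1) := by
        apply pow_le_pow_right₀ hK1
        calc (Finset.univ.filter (fun j : Fin (m+1) => (j:ℕ) < i)).card
            ≤ (Finset.univ : Finset (Fin (m+1))).card := Finset.card_filter_le _ _
          _ = m+1 := by simp

lemma integral_Pf (μ : Measure X) [IsProbabilityMeasure μ] (hb : 0 < b)
    (hSM : StronglyMeasurable Y) (hYb : ∀ x, ‖Y x‖ ≤ b) (hY0 : ∫ x, Y x ∂μ = 0)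
    (a s' : ℝ) :
    ∀ i, i ≤ m+1 → ∫ v, Pf Y b m a s' i v ∂(Measure.pi fun _ : Fin (m+1) => μ) = a ^ i := by
  have hPint : ∀ i : ℕ, Integrable (fun v => Pf Y b m a s' i v)
      (Measure.pi fun _ : Fin (m+1) => μ) := by
    intro i
    refine (integrable_const ((1 + |a| + |s'| * b) ^ (m+1))).mono'
      (Pf_meas hSM a s' i).aestronglyMeasurable (Filter.Eventually.of_forall fun v => ?_)
    rw [Real.norm_eq_abs]
    exact abs_Pf_le hb hYb a s' i v
  intro i
  induction i with
  | zero =>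
    intro _
    have : ∀ v : Fin (m+1) → X, Pf Y b m a s' 0 v = 1 := by
      intro v; rw [Pf]
      have : Finset.univ.filter (fun j : Fin (m+1) => (j:ℕ) < 0) = ∅ := by
        apply Finset.filter_false_of_mem; intro j _; omega
      rw [this, Finset.prod_empty]
    rw [integral_congr_ae (Filter.Eventually.of_forall this)]
    simp
  | succ i ih =>
    intro hsucc
    have hi : i < m+1 := hsucc
    set i' : Fin (m+1) := ⟨i, hi⟩ with hi'
    have hsplit : ∀ v : Fin (m+1) → X, Pf Y b m a s' (i+1) v =
        a * Pf Y b m a s' i v + s' * (Pf Y b m a s' i v * Zf Y b m i' v) := by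
      intro v
      rw [Pf, Fset_succ hi, Finset.prod_insert (by simp), ← Pf]
      ring
    -- the function g for the zero lemma
    set g : (Fin (m+1) → X) → H := fun v =>
      (Pf Y b m a s' i v * (Vf Y b m i v)⁻¹) • Sp Y m i v with hg
    have hginner : ∀ v, Pf Y b m a s' i v * Zf Y b m i' v = ⟪g v, Y (v i')⟫ := by
      intro v
      rw [hg]
      simp only [real_inner_smul_left]
      rw [Zf]
      have hV := Vf_pos (Y := Y) (b := b) hb i v
      field_simp
      rw [show ((i':ℕ)) = i from rfl]; field_simp
    have hgsm : StronglyMeasurable g :=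
      ((Pf_meas hSM a s' i).mul ((Vf_meas hSM i).inv)).stronglyMeasurable.smul
        (Sp_sm hSM i)
    have hgb : ∀ v, ‖g v‖ ≤ (1 + |a| + |s'| * b) ^ (m+1) := by
      intro v
      rw [hg]
      simp only [norm_smul, Real.norm_eq_abs]
      have hV := Vf_pos (Y := Y) (b := b) hb i v
      have h1 : |Pf Y b m a s' i v * (Vf Y b m i v)⁻¹| ≤
          |Pf Y b m a s' i v| * (Vf Y b m i v)⁻¹ := by
        rw [abs_mul, abs_of_pos (inv_pos.mpr hV)]
      have h2 : ‖Sp Y m i v‖ ≤ Vf Y b m i v := Sp_le_Vf hb i v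
      have h3 : |Pf Y b m a s' i v| * (Vf Y b m i v)⁻¹ * ‖Sp Y m i v‖ ≤ |Pf Y b m a s' i v| := by
        rw [mul_assoc]
        calc |Pf Y b m a s' i v| * ((Vf Y b m i v)⁻¹ * ‖Sp Y m i v‖) ≤
            |Pf Y b m a s' i v| * 1 := by
              apply mul_le_mul_of_nonneg_left _ (abs_nonneg _)
              rw [inv_mul_le_iff₀ hV, mul_one]
              exact h2
          _ = _ := mul_one _
      calc |Pf Y b m a s' i v * (Vf Y b m i v)⁻¹| * ‖Sp Y m i v‖ ≤
          |Pf Y b m a s' i v| * (Vf Y b m i v)⁻¹ * ‖Sp Y m i v‖ :=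
            mul_le_mul_of_nonneg_right h1 (norm_nonneg _)
        _ ≤ |Pf Y b m a s' i v| := h3
        _ ≤ (1 + |a| + |s'| * b) ^ (m+1) := abs_Pf_le hb hYb a s' i v
    have hgdep : ∀ v w : Fin (m+1) → X, (∀ j : Fin (m+1), (j:ℕ) < (i':ℕ) → v j = w j) →
        g v = g w := by
      intro v w h
      rw [hg]
      simp only
      rw [Pf_congr (le_of_lt hi) h, Sp_congr h, Vf, Vf, Sp_congr h]
    have hzero := integral_inner_eval_zero μ hSM hYb hY0 i' g hgsm
      ((1 + |a| + |s'| * b) ^ (m+1)) hgb hgdep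
    have hZint : Integrable (fun v => Pf Y b m a s' i v * Zf Y b m i' v)
        (Measure.pi fun _ : Fin (m+1) => μ) := by
      refine (integrable_const ((1 + |a| + |s'| * b) ^ (m+1) * b)).mono'
        ((Pf_meas hSM a s' i).mul (Zf_meas hSM i')).aestronglyMeasurable
        (Filter.Eventually.of_forall fun v => ?_)
      rw [Real.norm_eq_abs, abs_mul]
      exact mul_le_mul (abs_Pf_le hb hYb a s' i v) (abs_Zf_le hb hYb i' v)
        (abs_nonneg _) (by positivity)
    calc ∫ v, Pf Y b m a s' (i+1) v ∂(Measure.pi fun _ : Fin (m+1) => μ)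
        = ∫ v, (a * Pf Y b m a s' i v + s' * (Pf Y b m a s' i v * Zf Y b m i' v))
            ∂(Measure.pi fun _ : Fin (m+1) => μ) :=
          integral_congr_ae (Filter.Eventually.of_forall hsplit)
      _ = a * (∫ v, Pf Y b m a s' i v ∂(Measure.pi fun _ : Fin (m+1) => μ)) +
          s' * (∫ v, Pf Y b m a s' i v * Zf Y b m i' v ∂(Measure.pi fun _ : Fin (m+1) => μ)) := by
          rw [integral_add ((hPint i).const_mul a) (hZint.const_mul s'),
            integral_const_mul, integral_const_mul]
      _ = a * a ^ i + s' * 0 := by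
          rw [ih (le_of_lt hi)]
          congr 1
          congr 1
          rw [integral_congr_ae (Filter.Eventually.of_forall fun v => hginner v)]
          exact hzero
      _ = a ^ (i+1) := by ring


lemma exp_le_factor (hb : 0 < b) {l z : ℝ} (hz : |z| ≤ b) :
    Real.exp (l * z) ≤ Real.cosh (l*b) + (Real.sinh (l*b)/b) * z := by
  have hzb : -b ≤ z := neg_le_of_abs_le hz
  have hzb' : z ≤ b := le_of_abs_le hz
  set θ : ℝ := (b+z)/(2*b) with hθ
  have hθ0 : 0 ≤ θ := div_nonneg (by linarith) (by linarith)
  have hθ1 : 0 ≤ 1 - θ := by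
    rw [hθ, sub_nonneg, div_le_one (by linarith)]; linarith
  have hsum : θ + (1 - θ) = 1 := by ring
  have hconv := convexOn_exp.2 (Set.mem_univ (l*b)) (Set.mem_univ (-(l*b))) hθ0 hθ1 hsum
  have harg : θ • (l*b) + (1-θ) • (-(l*b)) = l * z := by
    simp only [smul_eq_mul]; rw [hθ]; field_simp; ring
  rw [harg] at hconv
  have hrhs : θ • Real.exp (l*b) + (1-θ) • Real.exp (-(l*b)) =
      Real.cosh (l*b) + (Real.sinh (l*b)/b) * z := by
    simp only [smul_eq_mul]
    rw [Real.cosh_eq, Real.sinh_eq, hθ]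
    field_simp
    ring
  rw [hrhs] at hconv
  exact hconv

lemma mgf_le (μ : Measure X) [IsProbabilityMeasure μ] (hb : 0 < b)
    (hSM : StronglyMeasurable Y) (hYb : ∀ x, ‖Y x‖ ≤ b) (hY0 : ∫ x, Y x ∂μ = 0) (l : ℝ) :
    ∫ v, Real.exp (l * ∑ j, Zf Y b m j v) ∂(Measure.pi fun _ : Fin (m+1) => μ) ≤
      Real.cosh (l*b) ^ (m+1) := by
  set a := Real.cosh (l*b) with ha
  set s' := Real.sinh (l*b)/b with hs'
  have hfuniv : Finset.univ.filter (fun j : Fin (m+1) => (j:ℕ) < m+1) = Finset.univ :=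
    Finset.filter_true_of_mem (fun j _ => j.isLt)
  have hpt : ∀ v : Fin (m+1) → X,
      Real.exp (l * ∑ j, Zf Y b m j v) ≤ Pf Y b m a s' (m+1) v := by
    intro v
    rw [Finset.mul_sum, Real.exp_sum, Pf, hfuniv]
    refine Finset.prod_le_prod (fun j _ => (Real.exp_pos _).le) (fun j _ => ?_)
    exact exp_le_factor hb (abs_Zf_le hb hYb j v)
  have hexp_meas : Measurable (fun v : Fin (m+1) → X => Real.exp (l * ∑ j, Zf Y b m j v)) := by
    apply Measurable.exp
    apply Measurable.const_mul
    exact Finset.measurable_sum _ (fun j _ => Zf_meas hSM j)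
  have hexp_int : Integrable (fun v : Fin (m+1) → X => Real.exp (l * ∑ j, Zf Y b m j v))
      (Measure.pi fun _ : Fin (m+1) => μ) := by
    refine (integrable_const (Real.exp (|l| * ((m+1) * b)))).mono'
      hexp_meas.aestronglyMeasurable (Filter.Eventually.of_forall fun v => ?_)
    rw [Real.norm_eq_abs, Real.abs_exp, Real.exp_le_exp]
    have h1 : |∑ j, Zf Y b m j v| ≤ (m+1) * b := by
      calc |∑ j, Zf Y b m j v| ≤ ∑ j, |Zf Y b m j v| := Finset.abs_sum_le_sum_abs _ _
        _ ≤ ∑ _j : Fin (m+1), b := Finset.sum_le_sum (fun j _ => abs_Zf_le hb hYb j v)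
        _ = (m+1) * b := by simp [Finset.sum_const, mul_comm]
    calc l * ∑ j, Zf Y b m j v ≤ |l * ∑ j, Zf Y b m j v| := le_abs_self _
      _ = |l| * |∑ j, Zf Y b m j v| := abs_mul _ _
      _ ≤ |l| * ((m+1) * b) := mul_le_mul_of_nonneg_left h1 (abs_nonneg l)
  have hPint : Integrable (fun v => Pf Y b m a s' (m+1) v)
      (Measure.pi fun _ : Fin (m+1) => μ) := by
    refine (integrable_const ((1 + |a| + |s'| * b) ^ (m+1))).mono'
      (Pf_meas hSM a s' (m+1)).aestronglyMeasurable (Filter.Eventually.of_forall fun v => ?_)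
    rw [Real.norm_eq_abs]
    exact abs_Pf_le hb hYb a s' (m+1) v
  calc ∫ v, Real.exp (l * ∑ j, Zf Y b m j v) ∂(Measure.pi fun _ : Fin (m+1) => μ)
      ≤ ∫ v, Pf Y b m a s' (m+1) v ∂(Measure.pi fun _ : Fin (m+1) => μ) :=
        integral_mono hexp_int hPint hpt
    _ = a ^ (m+1) := integral_Pf μ hb hSM hYb hY0 a s' (m+1) le_rfl

lemma tail_bound (μ : Measure X) [IsProbabilityMeasure μ] (hb : 0 < b)
    (hSM : StronglyMeasurable Y) (hYb : ∀ x, ‖Y x‖ ≤ b) (hY0 : ∫ x, Y x ∂μ = 0)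
    {s : ℝ} (hs : 0 < s) :
    ((Measure.pi fun _ : Fin (m+1) => μ) {v | s ≤ ∑ j, Zf Y b m j v}).toReal ≤
      Real.exp (-s^2/(2*((m:ℝ)+1)*b^2)) := by
  set l : ℝ := s/(((m:ℝ)+1)*b^2) with hl
  have hlpos : 0 < l := by positivity
  have hexp_meas : Measurable (fun v : Fin (m+1) → X => Real.exp (l * ∑ j, Zf Y b m j v)) := by
    apply Measurable.exp
    apply Measurable.const_mul
    exact Finset.measurable_sum _ (fun j _ => Zf_meas hSM j)
  have hexp_int : Integrable (fun v : Fin (m+1) → X => Real.exp (l * ∑ j, Zf Y b m j v))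
      (Measure.pi fun _ : Fin (m+1) => μ) := by
    refine (integrable_const (Real.exp (|l| * ((m+1) * b)))).mono'
      hexp_meas.aestronglyMeasurable (Filter.Eventually.of_forall fun v => ?_)
    rw [Real.norm_eq_abs, Real.abs_exp, Real.exp_le_exp]
    have h1 : |∑ j, Zf Y b m j v| ≤ (m+1) * b := by
      calc |∑ j, Zf Y b m j v| ≤ ∑ j, |Zf Y b m j v| := Finset.abs_sum_le_sum_abs _ _
        _ ≤ ∑ _j : Fin (m+1), b := Finset.sum_le_sum (fun j _ => abs_Zf_le hb hYb j v)
        _ = (m+1) * b := by simp [Finset.sum_const, mul_comm]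
    calc l * ∑ j, Zf Y b m j v ≤ |l * ∑ j, Zf Y b m j v| := le_abs_self _
      _ = |l| * |∑ j, Zf Y b m j v| := abs_mul _ _
      _ ≤ |l| * ((m+1) * b) := mul_le_mul_of_nonneg_left h1 (abs_nonneg l)
  have hchern := ProbabilityTheory.measure_ge_le_exp_mul_mgf
    (X := fun v => ∑ j, Zf Y b m j v) (μ := Measure.pi fun _ : Fin (m+1) => μ)
    s hlpos.le hexp_int
  have hmgf : ProbabilityTheory.mgf (fun v => ∑ j, Zf Y b m j v)
      (Measure.pi fun _ : Fin (m+1) => μ) l ≤ Real.cosh (l*b) ^ (m+1) :=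
    mgf_le μ hb hSM hYb hY0 l
  have hcosh : Real.cosh (l*b) ^ (m+1) ≤ Real.exp (((m:ℝ)+1) * ((l*b)^2/2)) := by
    calc Real.cosh (l*b) ^ (m+1) ≤ Real.exp ((l*b)^2/2) ^ (m+1) :=
          pow_le_pow_left₀ (Real.cosh_pos (x := l*b)).le (Real.cosh_le_exp_half_sq _) _
      _ = Real.exp (((m:ℝ)+1) * ((l*b)^2/2)) := by
          rw [← Real.exp_nat_mul]; norm_num
  have hfinal : Real.exp (-l * s) * Real.exp (((m:ℝ)+1) * ((l*b)^2/2)) =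
      Real.exp (-s^2/(2*((m:ℝ)+1)*b^2)) := by
    rw [← Real.exp_add]
    congr 1
    rw [hl]
    have hm1 : ((m:ℝ)+1) ≠ 0 := by positivity
    field_simp
    ring
  calc ((Measure.pi fun _ : Fin (m+1) => μ) {v | s ≤ ∑ j, Zf Y b m j v}).toReal ≤
      Real.exp (-l * s) * ProbabilityTheory.mgf (fun v => ∑ j, Zf Y b m j v)
        (Measure.pi fun _ : Fin (m+1) => μ) l := hchern
    _ ≤ Real.exp (-l * s) * (Real.cosh (l*b) ^ (m+1)) := by
        apply mul_le_mul_of_nonneg_left hmgf (Real.exp_pos _).le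
    _ ≤ Real.exp (-l * s) * Real.exp (((m:ℝ)+1) * ((l*b)^2/2)) := by
        apply mul_le_mul_of_nonneg_left hcosh (Real.exp_pos _).le
    _ = Real.exp (-s^2/(2*((m:ℝ)+1)*b^2)) := hfinal

end EmpMeanAux

set_option maxHeartbeats 1000000 in
open EmpMeanAux in
/-- Concentration of the empirical kernel mean embedding.
Let `H` be a separable real Hilbert space, `x₁, …, x_n` i.i.d. with law `μ`, and
`φ : X → H` strongly measurable with `‖φ(x)‖ ≤ c` `μ`-a.e. Then for every
`δ ∈ (0,1]`, with probability at least `1 - δ`,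
`‖∫ φ dμ - (1/n) Σ_i φ(x_i)‖ ≤ 4 c n^{-1/2} log(6n/δ)`. -/
theorem empirical_mean_embedding_concentration
    {H : Type*} [NormedAddCommGroup H] [InnerProductSpace ℝ H] [CompleteSpace H]
    [TopologicalSpace.SeparableSpace H]
    {X : Type*} [MeasurableSpace X]
    {Ω : Type*} [MeasurableSpace Ω] (P : Measure Ω) [IsProbabilityMeasure P]
    (n : ℕ) (hn : 1 ≤ n)
    (x : Fin n → Ω → X) (hmeas : ∀ i, Measurable (x i))
    (hindep : iIndepFun x P)
    (μ : Measure X) [IsProbabilityMeasure μ] (hlaw : ∀ i, P.map (x i) = μ)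
    (φ : X → H) (hφ : StronglyMeasurable φ)
    (c : ℝ) (hc : 0 < c) (hbound : ∀ᵐ a ∂μ, ‖φ a‖ ≤ c) :
    ∀ δ : ℝ, δ ∈ Set.Ioc (0:ℝ) 1 →
      ENNReal.ofReal (1 - δ) ≤
        P {ω | ‖(∫ a, φ a ∂μ) - (n : ℝ)⁻¹ • ∑ i, φ (x i ω)‖ ≤
          4 * c * (n : ℝ) ^ (-(1:ℝ) / 2) * Real.log (6 * n / δ)} := by
  intro δ hδ
  obtain ⟨hδ0, hδ1⟩ := hδ
  obtain ⟨m, rfl⟩ : ∃ m, n = m + 1 := ⟨n - 1, by omega⟩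
  clear hn
  simp only [Nat.cast_add, Nat.cast_one]
  -- notation
  set N : ℝ := (m:ℝ) + 1 with hN
  have hNpos : (0:ℝ) < N := by rw [hN]; positivity
  have hN1 : (1:ℝ) ≤ N := by rw [hN]; have := Nat.cast_nonneg (α := ℝ) m; linarith
  set w : H := ∫ a, φ a ∂μ with hw
  set φ' : X → H := fun a => if ‖φ a‖ ≤ c then φ a else 0 with hφ'
  have hφ'SM : StronglyMeasurable φ' := by
    apply StronglyMeasurable.ite _ hφ stronglyMeasurable_const
    exact measurableSet_le hφ.norm.measurable measurable_const
  have hφ'b : ∀ a, ‖φ' a‖ ≤ c := by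
    intro a
    rw [hφ']
    by_cases h : ‖φ a‖ ≤ c
    · simpa [h]
    · simp [h, hc.le]
  have hφ'ae : φ' =ᵐ[μ] φ := by
    filter_upwards [hbound] with a ha
    simp [hφ', ha]
  have hw' : ∫ a, φ' a ∂μ = w := integral_congr_ae hφ'ae
  have hφ'int : Integrable φ' μ :=
    (integrable_const c).mono' hφ'SM.aestronglyMeasurable
      (Filter.Eventually.of_forall hφ'b)
  have hwb : ‖w‖ ≤ c := by
    rw [← hw']
    calc ‖∫ a, φ' a ∂μ‖ ≤ ∫ a, ‖φ' a‖ ∂μ := norm_integral_le_integral_norm _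
      _ ≤ ∫ _a, c ∂μ := integral_mono hφ'int.norm (integrable_const c) hφ'b
      _ = c := by simp
  set Y : X → H := fun a => φ' a - w with hY
  set b : ℝ := 2 * c with hb
  have hbpos : 0 < b := by rw [hb]; linarith
  have hYb : ∀ a, ‖Y a‖ ≤ b := by
    intro a
    rw [hY, hb]
    calc ‖φ' a - w‖ ≤ ‖φ' a‖ + ‖w‖ := norm_sub_le _ _
      _ ≤ c + c := add_le_add (hφ'b a) hwb
      _ = 2 * c := by ring
  have hYSM : StronglyMeasurable Y := hφ'SM.sub stronglyMeasurable_const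
  have hY0 : ∫ a, Y a ∂μ = 0 := by
    rw [hY]
    rw [integral_sub hφ'int (integrable_const w), hw', integral_const]
    simp
  set L : ℝ := Real.log (6 * N / δ) with hL
  have h6pos : (0:ℝ) < 6 * N / δ := by positivity
  have hlog6 : (1:ℝ) ≤ Real.log 6 := by
    rw [Real.le_log_iff_exp_le (by norm_num)]
    calc Real.exp 1 ≤ 2.7182818286 := Real.exp_one_lt_d9.le
      _ ≤ 6 := by norm_num
  have hL6 : Real.log 6 ≤ L := by
    rw [hL]
    apply Real.log_le_log (by norm_num)
    rw [le_div_iff₀ hδ0]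
    nlinarith
  have hL1 : (1:ℝ) ≤ L := le_trans hlog6 hL6
  set s : ℝ := c * Real.sqrt N * (4*L - 3) with hs
  have hsqpos : (0:ℝ) < Real.sqrt N := Real.sqrt_pos.mpr hNpos
  have hspos : 0 < s := by
    rw [hs]
    have h43 : (0:ℝ) < 4*L - 3 := by linarith
    positivity
  have hss : Real.sqrt N * Real.sqrt N = N := Real.mul_self_sqrt hNpos.le
  -- the sample map and its law
  set T : Ω → (Fin (m+1) → X) := fun ω j => x j ω with hT
  have hTmeas : Measurable T := measurable_pi_lambda _ hmeas
  have hmap : P.map T = Measure.pi (fun _ : Fin (m+1) => μ) := by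
    refine (Measure.pi_eq fun u hu => ?_).symm
    rw [Measure.map_apply hTmeas (MeasurableSet.univ_pi hu)]
    have h1 : T ⁻¹' (Set.univ.pi u) = ⋂ i ∈ Finset.univ, x i ⁻¹' u i := by
      ext ω; simp [hT, Set.mem_univ_pi]
    rw [h1, hindep.measure_inter_preimage_eq_mul Finset.univ (fun i _ => hu i)]
    refine Finset.prod_congr rfl fun i _ => ?_
    rw [← hlaw i, Measure.map_apply (hmeas i) (hu i)]
  -- a.e. the samples land where φ = φ'
  have hae : ∀ᵐ ω ∂P, ∀ i, φ (x i ω) = φ' (x i ω) := by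
    rw [ae_all_iff]
    intro i
    have h1 : ∀ᵐ a ∂(P.map (x i)), φ a = φ' a := by
      rw [hlaw i]; exact hφ'ae.mono fun a ha => ha.symm
    exact ae_of_ae_map (hmeas i).aemeasurable h1
  -- the event
  set t : ℝ := 4 * c * N ^ (-(1:ℝ)/2) * L with ht
  have hrpow : N ^ (-(1:ℝ)/2) = (Real.sqrt N)⁻¹ := by
    rw [show (-(1:ℝ)/2) = -(1/2) by ring, Real.rpow_neg hNpos.le, ← Real.sqrt_eq_rpow]
  set bigM : (Fin (m+1) → X) → ℝ := fun v => ∑ j, Zf Y b m j v with hbigM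
  have hMmeas : Measurable bigM := Finset.measurable_sum _ (fun j _ => Zf_meas hYSM j)
  set good : Set Ω := {ω | ‖w - N⁻¹ • ∑ i, φ (x i ω)‖ ≤ t} with hgood
  have hgood_meas : MeasurableSet good := by
    have hf : Measurable fun ω => ‖w - N⁻¹ • ∑ i, φ (x i ω)‖ := by
      apply StronglyMeasurable.measurable
      apply StronglyMeasurable.norm
      apply StronglyMeasurable.sub stronglyMeasurable_const
      apply StronglyMeasurable.const_smul
      exact Finset.stronglyMeasurable_fun_sum _ (fun i _ => hφ.comp_measurable (hmeas i))
    exact measurableSet_le hf measurable_const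
  -- event inclusion a.e.
  have hsub : ∀ᵐ ω ∂P, ω ∈ goodᶜ → ω ∈ {ω | s ≤ bigM (T ω)} := by
    filter_upwards [hae] with ω hω hbad
    by_contra hM
    simp only [Set.mem_setOf_eq, not_le] at hM
    apply hbad
    show ω ∈ good
    have hSp : Sp Y m (m+1) (T ω) = (∑ i, φ (x i ω)) - (m+1 : ℕ) • w := by
      rw [Sp, Finset.filter_true_of_mem (fun j _ => j.isLt)]
      have hterm : ∀ j : Fin (m+1), Y (T ω j) = φ (x j ω) - w := by
        intro j
        rw [hY]
        simp only [hT]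
        rw [hω j]
      rw [Finset.sum_congr rfl (fun j _ => hterm j), Finset.sum_sub_distrib]
      congr 1
      rw [Finset.sum_const, Finset.card_univ, Fintype.card_fin]
    have hkey : w - N⁻¹ • ∑ i, φ (x i ω) = -(N⁻¹ • Sp Y m (m+1) (T ω)) := by
      rw [hSp, smul_sub, ← Nat.cast_smul_eq_nsmul ℝ, smul_smul]
      rw [show N⁻¹ * ((m+1 : ℕ) : ℝ) = 1 by
        rw [hN]; push_cast; field_simp]
      rw [one_smul]
      abel
    have hpath := pathwise hbpos hYb (T ω)
    have hnorm : ‖w - N⁻¹ • ∑ i, φ (x i ω)‖ = N⁻¹ * ‖Sp Y m (m+1) (T ω)‖ := by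
      rw [hkey, norm_neg, norm_smul, Real.norm_eq_abs, abs_of_pos (by positivity)]
    rw [hgood, Set.mem_setOf_eq, hnorm]
    have hNsq : Real.sqrt ((m:ℝ)+1) = Real.sqrt N := by rw [hN]
    have hchain : N⁻¹ * ‖Sp Y m (m+1) (T ω)‖ ≤
        N⁻¹ * ((3/2) * b * Real.sqrt N + s) := by
      apply mul_le_mul_of_nonneg_left _ (by positivity)
      calc ‖Sp Y m (m+1) (T ω)‖ ≤ (3/2) * b * Real.sqrt ((m:ℝ)+1) + ∑ j, Zf Y b m j (T ω) :=
            hpath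
        _ ≤ (3/2) * b * Real.sqrt N + s := by
            rw [hNsq]
            have : bigM (T ω) ≤ s := hM.le
            rw [hbigM] at this
            linarith [this]
    refine le_trans hchain ?_
    have heq : N⁻¹ * ((3/2) * b * Real.sqrt N + s) = t := by
      rw [hs, hb, ht, hrpow]
      have h3 : (3:ℝ)/2 * (2*c) * Real.sqrt N + c * Real.sqrt N * (4*L-3)
          = 4 * c * L * Real.sqrt N := by ring
      rw [h3, ← hss, mul_inv]
      field_simp
      rw [Real.sqrt_sq hsqpos.le, Real.sq_sqrt hNpos.le]
    rw [heq]
  -- tail bound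
  set A : Set (Fin (m+1) → X) := {v | s ≤ bigM v} with hA
  have hAmeas : MeasurableSet A := measurableSet_le measurable_const hMmeas
  have htransfer : P {ω | s ≤ bigM (T ω)} = (Measure.pi fun _ : Fin (m+1) => μ) A := by
    rw [← hmap, Measure.map_apply hTmeas hAmeas]
    rfl
  have htail := tail_bound (Y := Y) (b := b) (m := m) μ hbpos hYSM hYb hY0 hspos
  -- numeric bound
  have hnum : Real.exp (-s^2/(2*((m:ℝ)+1)*b^2)) ≤ δ := by
    have hexp1 : -s^2/(2*((m:ℝ)+1)*b^2) = -((4*L-3)^2/8) := by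
      rw [hs, hb]
      have hsq2 : (c * Real.sqrt N * (4*L-3))^2 = c^2 * N * (4*L-3)^2 := by
        rw [mul_pow, mul_pow, Real.sq_sqrt hNpos.le]
      rw [hsq2, ← hN]
      field_simp
      ring
    rw [hexp1]
    have hδeq : δ = 6 * N * Real.exp (-L) := by
      rw [hL, Real.exp_neg, Real.exp_log h6pos, inv_div, mul_comm (6*N) (δ/(6*N)),
        div_mul_cancel₀]
      positivity
    rw [hδeq]
    have hstep : Real.exp (-((4*L-3)^2/8)) ≤ 6 * Real.exp (-L) := by
      rw [show (6:ℝ) * Real.exp (-L) = Real.exp (Real.log 6 - L) by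
        rw [Real.exp_sub, Real.exp_log (by norm_num), Real.exp_neg]; ring]
      rw [Real.exp_le_exp]
      nlinarith [sq_nonneg (L - 1), hlog6]
    calc Real.exp (-((4*L-3)^2/8)) ≤ 6 * Real.exp (-L) := hstep
      _ ≤ 6 * N * Real.exp (-L) := by nlinarith [Real.exp_pos (-L)]
  -- assemble
  have hcompl : P goodᶜ ≤ ENNReal.ofReal δ := by
    calc P goodᶜ ≤ P {ω | s ≤ bigM (T ω)} := measure_mono_ae hsub
      _ = (Measure.pi fun _ : Fin (m+1) => μ) A := htransfer
      _ ≤ ENNReal.ofReal δ := by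
          rw [← ENNReal.ofReal_toReal (measure_ne_top _ A)]
          exact ENNReal.ofReal_le_ofReal (le_trans htail hnum)
  have hPgood : P good = 1 - P goodᶜ := by
    have h1 := prob_compl_eq_one_sub (μ := P) hgood_meas.compl
    rw [compl_compl] at h1
    exact h1
  rw [hPgood]
  calc ENNReal.ofReal (1 - δ) = 1 - ENNReal.ofReal δ := by
        rw [ENNReal.ofReal_sub 1 hδ0.le, ENNReal.ofReal_one]
    _ ≤ 1 - P goodᶜ := tsub_le_tsub_left hcompl 1
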